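/- The ridge polynomials φ̃_{n,k}(x) = (1/√π) U_n(x₁ cos(kh) + x₂ sin(kh)), h = π/(n+1), k = 0,…,n, where U_n is the Chebyshev polynomial of the second kind of degree n, form an orthonormal family in L²(B_2) with respect to the standard inner product on the unit disk. -/

import Mathlib

open Real MeasureTheory Polynomial Polynomial.Chebyshev Set

noncomputable def rotL (a : ℝ) : EuclideanSpace ℝ (Fin 2) ≃ₗ[ℝ] EuclideanSpace ℝ (Fin 2) :=
{ toFun := fun x => WithLp.toLp 2 ![Real.cos a * x 0 - Real.sin a * x 1, Real.sin a * x 0 + Real.cos a * x 1],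
  invFun := fun y => WithLp.toLp 2 ![Real.cos a * y 0 + Real.sin a * y 1, -Real.sin a * y 0 + Real.cos a * y 1],
  map_add' := by
    intro x y; ext i; fin_cases i <;>
      simp [EuclideanSpace, PiLp.add_apply] <;> ring
  map_smul' := by
    intro c x; ext i; fin_cases i <;>
      simp [EuclideanSpace, PiLp.smul_apply, smul_eq_mul] <;> ring
  left_inv := by
    intro x; ext i; have h := Real.sin_sq_add_cos_sq a
    fin_cases i
    · simp; linear_combination x 0 * h
    · simp; linear_combination x 1 * h
  right_inv := by
    intro x; ext i; have h := Real.sin_sq_add_cos_sq a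
    fin_cases i
    · simp; linear_combination x 0 * h
    · simp; linear_combination x 1 * h }

noncomputable def rotE (a : ℝ) : EuclideanSpace ℝ (Fin 2) ≃ₗᵢ[ℝ] EuclideanSpace ℝ (Fin 2) :=
{ rotL a with
  norm_map' := by
    intro x
    rw [EuclideanSpace.norm_eq, EuclideanSpace.norm_eq]
    congr 1
    have h := Real.sin_sq_add_cos_sq a
    simp only [rotL, LinearEquiv.coe_mk, LinearMap.coe_mk, AddHom.coe_mk, PiLp.toLp_apply, Fin.sum_univ_two, Real.norm_eq_abs, sq_abs,
      Matrix.cons_val_zero, Matrix.cons_val_one, Matrix.head_cons]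
    linear_combination (x 0 ^ 2 + x 1 ^ 2) * h }


noncomputable section

lemma ball_transfer (f : ℝ → ℝ → ℝ) :
    ∫ x in Metric.ball (0 : EuclideanSpace ℝ (Fin 2)) 1, f (x 0) (x 1)
      = ∫ p in {p : ℝ × ℝ | p.1 ^ 2 + p.2 ^ 2 < 1}, f p.1 p.2 := by
  have hψe : MeasurePreserving
      ((MeasurableEquiv.finTwoArrow.symm.trans (MeasurableEquiv.toLp 2 (Fin 2 → ℝ))) :
        ℝ × ℝ ≃ᵐ EuclideanSpace ℝ (Fin 2)) volume volume :=
    ((EuclideanSpace.volume_preserving_symm_measurableEquiv_toLp (Fin 2)).symm).comp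
      ((volume_preserving_finTwoArrow ℝ).symm)
  set ψ := (MeasurableEquiv.finTwoArrow.symm.trans (MeasurableEquiv.toLp 2 (Fin 2 → ℝ)))
  have happ0 : ∀ p : ℝ × ℝ, (ψ p : EuclideanSpace ℝ (Fin 2)) 0 = p.1 := fun p => rfl
  have happ1 : ∀ p : ℝ × ℝ, (ψ p : EuclideanSpace ℝ (Fin 2)) 1 = p.2 := fun p => rfl
  have hpre : ψ ⁻¹' (Metric.ball (0 : EuclideanSpace ℝ (Fin 2)) 1)
      = {p : ℝ × ℝ | p.1 ^ 2 + p.2 ^ 2 < 1} := by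
    ext p
    simp only [Set.mem_preimage, Metric.mem_ball, dist_zero_right, Set.mem_setOf_eq]
    rw [EuclideanSpace.norm_eq]
    simp only [Fin.sum_univ_two, happ0, happ1, Real.norm_eq_abs, sq_abs]
    rw [show (1:ℝ) = √1 from (Real.sqrt_one).symm, Real.sqrt_lt_sqrt_iff (by positivity)]
    norm_num
  rw [← hψe.setIntegral_preimage_emb ψ.measurableEmbedding (fun x => f (x 0) (x 1)) _, hpre]
  simp only [happ0, happ1]



abbrev Sdisk : Set (ℝ × ℝ) := {p : ℝ × ℝ | p.1 ^ 2 + p.2 ^ 2 < 1}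

lemma Sdisk_measurable : MeasurableSet Sdisk :=
  (isOpen_lt (by fun_prop) continuous_const).measurableSet

lemma Sdisk_integrable (F : ℝ × ℝ → ℝ) (hF : Continuous F) : Integrable (Sdisk.indicator F) := by
  rw [integrable_indicator_iff Sdisk_measurable]
  have hsub : Sdisk ⊆ Metric.closedBall (0 : ℝ × ℝ) 1 := by
    rintro ⟨x, y⟩ h
    simp only [Set.mem_setOf_eq] at h
    simp only [Metric.mem_closedBall, dist_zero_right, Prod.norm_def, Real.norm_eq_abs,
      max_le_iff]
    constructor <;> [skip; skip] <;> rw [abs_le] <;> constructor <;> nlinarith [sq_nonneg x, sq_nonneg y]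
  exact ((hF.continuousOn).integrableOn_compact (isCompact_closedBall _ _)).mono_set hsub

/-- section set of the disk -/
lemma Sdisk_section (x : ℝ) (hx : x ^ 2 < 1) :
    {y : ℝ | x ^ 2 + y ^ 2 < 1} = Ioo (-Real.sqrt (1 - x ^ 2)) (Real.sqrt (1 - x ^ 2)) := by
  have hw : Real.sqrt (1 - x ^ 2) ^ 2 = 1 - x ^ 2 := Real.sq_sqrt (by linarith)
  have hw0 : 0 ≤ Real.sqrt (1 - x ^ 2) := Real.sqrt_nonneg _
  ext y
  simp only [Set.mem_setOf_eq, Set.mem_Ioo]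
  constructor
  · intro h
    constructor <;> nlinarith [sq_nonneg (y + Real.sqrt (1 - x ^ 2)), sq_nonneg (y - Real.sqrt (1 - x ^ 2))]
  · rintro ⟨h1, h2⟩
    nlinarith

lemma inner_integral_zero (m : ℕ) (γ : ℝ) (h1 : Real.sin γ ≠ 0)
    (h2 : Real.sin (((m : ℝ) + 1) * γ) = 0) (x : ℝ) (hx : x ^ 2 < 1) :
    ∫ y in (-Real.sqrt (1 - x ^ 2))..(Real.sqrt (1 - x ^ 2)),
      (U ℝ m).eval (x * Real.cos γ + y * Real.sin γ) = 0 := by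
  set w := Real.sqrt (1 - x ^ 2) with hwdef
  have hderiv : ∀ y ∈ Set.uIcc (-w) w,
      HasDerivAt (fun y => (T ℝ (m + 1)).eval (x * Real.cos γ + y * Real.sin γ))
        (((m : ℝ) + 1) * Real.sin γ * (U ℝ m).eval (x * Real.cos γ + y * Real.sin γ)) y := by
    intro y _
    have haff : HasDerivAt (fun y : ℝ => x * Real.cos γ + y * Real.sin γ) (Real.sin γ) y := by
      simpa using (hasDerivAt_mul_const (Real.sin γ)).const_add (x * Real.cos γ)
    have hp := (Polynomial.hasDerivAt (T ℝ (m + 1)) (x * Real.cos γ + y * Real.sin γ)).comp y haff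
    have : (derivative (T ℝ ((m : ℤ) + 1))).eval (x * Real.cos γ + y * Real.sin γ)
        = ((m : ℝ) + 1) * (U ℝ m).eval (x * Real.cos γ + y * Real.sin γ) := by
      rw [T_derivative_eq_U]
      push_cast
      simp
    exact hp.congr_deriv (by rw [this]; ring)
  have hint : IntervalIntegrable
      (fun y => ((m : ℝ) + 1) * Real.sin γ * (U ℝ m).eval (x * Real.cos γ + y * Real.sin γ))
      volume (-w) w := by
    apply Continuous.intervalIntegrable
    fun_prop
  have heq := intervalIntegral.integral_eq_sub_of_hasDerivAt hderiv hint
  -- compute RHS via trig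
  have hx1 : -1 ≤ x := by nlinarith
  have hx2 : x ≤ 1 := by nlinarith
  set u := Real.arccos x with hu
  have hcu : Real.cos u = x := Real.cos_arccos hx1 hx2
  have hsu : Real.sin u = w := Real.sin_arccos x
  have harg1 : x * Real.cos γ + w * Real.sin γ = Real.cos (u - γ) := by
    rw [Real.cos_sub, hcu, hsu]; try ring
  have harg2 : x * Real.cos γ + (-w) * Real.sin γ = Real.cos (u + γ) := by
    rw [Real.cos_add, hcu, hsu]; try ring
  have hTb : (T ℝ (m + 1)).eval (x * Real.cos γ + w * Real.sin γ) = Real.cos (((m : ℝ) + 1) * (u - γ)) := by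
    rw [harg1]
    have := T_real_cos (u - γ) ((m : ℤ) + 1)
    push_cast at this ⊢
    exact this
  have hTa : (T ℝ (m + 1)).eval (x * Real.cos γ + (-w) * Real.sin γ) = Real.cos (((m : ℝ) + 1) * (u + γ)) := by
    rw [harg2]
    have := T_real_cos (u + γ) ((m : ℤ) + 1)
    push_cast at this ⊢
    exact this
  rw [hTb, hTa] at heq
  have hzero : Real.cos (((m : ℝ) + 1) * (u - γ)) - Real.cos (((m : ℝ) + 1) * (u + γ)) = 0 := by
    rw [Real.cos_sub_cos]
    have e1 : (((m : ℝ) + 1) * (u - γ) + ((m : ℝ) + 1) * (u + γ)) / 2 = ((m : ℝ) + 1) * u := by ring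
    have e2 : (((m : ℝ) + 1) * (u - γ) - ((m : ℝ) + 1) * (u + γ)) / 2 = -(((m : ℝ) + 1) * γ) := by ring
    rw [e1, e2, Real.sin_neg, h2]
    ring
  rw [intervalIntegral.integral_const_mul] at heq
  have hne : ((m : ℝ) + 1) * Real.sin γ ≠ 0 := by
    apply mul_ne_zero _ h1
    positivity
  rw [hzero] at heq
  exact (mul_eq_zero.mp heq).resolve_left hne

lemma offdiag (m : ℕ) (γ : ℝ) (h1 : Real.sin γ ≠ 0)
    (h2 : Real.sin (((m : ℝ) + 1) * γ) = 0) :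
    ∫ p in Sdisk, (U ℝ m).eval p.1 * (U ℝ m).eval (p.1 * Real.cos γ + p.2 * Real.sin γ) = 0 := by
  set F : ℝ × ℝ → ℝ :=
    fun p => (U ℝ m).eval p.1 * (U ℝ m).eval (p.1 * Real.cos γ + p.2 * Real.sin γ) with hFdef
  have hF : Continuous F := by
    apply Continuous.mul
    · exact ((U ℝ (m : ℤ)).continuous).comp continuous_fst
    · exact ((U ℝ (m : ℤ)).continuous).comp (by fun_prop)
  have hInt := Sdisk_integrable F hF
  rw [← integral_indicator Sdisk_measurable]
  rw [Measure.volume_eq_prod] at hInt ⊢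
  rw [integral_prod _ hInt]
  have hin : ∀ x : ℝ, (∫ y : ℝ, Sdisk.indicator F (x, y)) = 0 := by
    intro x
    have hrfl : (fun y => Sdisk.indicator F (x, y))
        = ({y : ℝ | x ^ 2 + y ^ 2 < 1}.indicator (fun y => F (x, y))) := rfl
    by_cases hx : x ^ 2 < 1
    · rw [hrfl, Sdisk_section x hx, integral_indicator measurableSet_Ioo,
        ← integral_Ioc_eq_integral_Ioo,
        ← intervalIntegral.integral_of_le
          (by linarith [Real.sqrt_nonneg (1 - x ^ 2)] : -Real.sqrt (1 - x ^ 2) ≤ Real.sqrt (1 - x ^ 2))]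
      have : ∫ y in (-Real.sqrt (1 - x ^ 2))..(Real.sqrt (1 - x ^ 2)), F (x, y)
          = (U ℝ m).eval x * ∫ y in (-Real.sqrt (1 - x ^ 2))..(Real.sqrt (1 - x ^ 2)),
              (U ℝ m).eval (x * Real.cos γ + y * Real.sin γ) := by
        rw [← intervalIntegral.integral_const_mul]
      rw [this, inner_integral_zero m γ h1 h2 x hx, mul_zero]
    · rw [hrfl]
      have hempty : {y : ℝ | x ^ 2 + y ^ 2 < 1} = ∅ := by
        ext y; simp only [Set.mem_setOf_eq, Set.mem_empty_iff_false, iff_false, not_lt]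
        nlinarith [sq_nonneg y]
      rw [hempty]
      simp
  simp only [hin, integral_zero]

lemma two_sin_sq (θ : ℝ) : 2 * Real.sin θ ^ 2 = 1 - Real.cos (2 * θ) := by
  rw [Real.cos_two_mul]
  nlinarith [Real.sin_sq_add_cos_sq θ]

lemma diag_1d (m : ℕ) :
    ∫ x in (-1 : ℝ)..1, 2 * Real.sqrt (1 - x ^ 2) * ((U ℝ m).eval x) ^ 2 = π := by
  set f : ℝ → ℝ := fun t => 2 * Real.sqrt (1 - t ^ 2) * ((U ℝ m).eval t) ^ 2 with hfdef
  have hfc : Continuous f := by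
    apply Continuous.mul
    · exact continuous_const.mul (Real.continuous_sqrt.comp (by fun_prop))
    · exact ((U ℝ (m : ℤ)).continuous).pow 2
  have hsub := intervalIntegral.integral_comp_smul_deriv
    (f := Real.cos) (f' := fun x => -Real.sin x) (g := f) (a := 0) (b := π)
    (fun x _ => Real.hasDerivAt_cos x) (Continuous.continuousOn (by fun_prop)) hfc
  rw [Real.cos_zero, Real.cos_pi] at hsub
  simp only [Function.comp_def] at hsub
  have h1 : ∫ x in (-1 : ℝ)..1, f x = -∫ x in (0 : ℝ)..π, (-Real.sin x) • f (Real.cos x) := by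
    rw [hsub, intervalIntegral.integral_symm]
  rw [h1]
  have h2 : ∫ x in (0 : ℝ)..π, (-Real.sin x) • f (Real.cos x)
      = ∫ x in (0 : ℝ)..π, (Real.cos ((2 * ((m : ℝ) + 1)) * x) - 1) := by
    apply intervalIntegral.integral_congr
    intro x hx
    rw [Set.uIcc_of_le Real.pi_nonneg] at hx
    have hs : 0 ≤ Real.sin x := Real.sin_nonneg_of_mem_Icc (by simpa using hx)
    have hsq : Real.sqrt (1 - Real.cos x ^ 2) = Real.sin x := by
      rw [show 1 - Real.cos x ^ 2 = Real.sin x ^ 2 by nlinarith [Real.sin_sq_add_cos_sq x]]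
      exact Real.sqrt_sq hs
    have hU : (U ℝ m).eval (Real.cos x) * Real.sin x = Real.sin (((m : ℝ) + 1) * x) := by
      have := U_real_cos x (m : ℤ)
      push_cast at this ⊢
      exact this
    have h2s := two_sin_sq (((m : ℝ) + 1) * x)
    show (-Real.sin x) • f (Real.cos x) = _
    simp only [hfdef, smul_eq_mul, hsq]
    rw [show (2 * ((m : ℝ) + 1)) * x = 2 * (((m : ℝ) + 1) * x) by ring]
    linear_combination (-2 * ((U ℝ m).eval (Real.cos x) * Real.sin x
      + Real.sin (((m : ℝ) + 1) * x))) * hU - h2s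
  rw [h2]
  have h3 : ∫ x in (0 : ℝ)..π, (Real.cos ((2 * ((m : ℝ) + 1)) * x) - 1)
      = (∫ x in (0 : ℝ)..π, Real.cos ((2 * ((m : ℝ) + 1)) * x)) - (∫ _x in (0 : ℝ)..π, (1 : ℝ)) := by
    rw [intervalIntegral.integral_sub (by apply Continuous.intervalIntegrable; fun_prop)
      intervalIntegrable_const]
  rw [h3]
  have hc : (2 * ((m : ℝ) + 1)) ≠ 0 := by positivity
  have h4 : ∫ x in (0 : ℝ)..π, Real.cos ((2 * ((m : ℝ) + 1)) * x) = 0 := by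
    rw [intervalIntegral.integral_comp_mul_left (fun x => Real.cos x) hc]
    rw [mul_zero, integral_cos, Real.sin_zero]
    rw [show (2 * ((m : ℝ) + 1)) * π = ((2 * (m + 1) : ℕ) : ℝ) * π by push_cast; ring,
      Real.sin_nat_mul_pi]
    simp
  rw [h4]
  simp

lemma diag_S (m : ℕ) :
    ∫ p in Sdisk, (U ℝ m).eval p.1 * (U ℝ m).eval (p.1 * Real.cos 0 + p.2 * Real.sin 0) = π := by
  have hsimp : ∀ p : ℝ × ℝ, (U ℝ m).eval p.1 * (U ℝ m).eval (p.1 * Real.cos 0 + p.2 * Real.sin 0)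
      = (U ℝ m).eval p.1 * (U ℝ m).eval p.1 := by
    intro p; simp
  simp only [hsimp]
  set F : ℝ × ℝ → ℝ := fun p => (U ℝ m).eval p.1 * (U ℝ m).eval p.1 with hFdef
  have hF : Continuous F := by
    exact (((U ℝ (m : ℤ)).continuous).comp continuous_fst).mul
      (((U ℝ (m : ℤ)).continuous).comp continuous_fst)
  have hInt := Sdisk_integrable F hF
  rw [← integral_indicator Sdisk_measurable]
  rw [Measure.volume_eq_prod] at hInt ⊢
  rw [integral_prod _ hInt]
  have hin : (fun x : ℝ => ∫ y : ℝ, Sdisk.indicator F (x, y))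
      = (Set.Ioo (-1 : ℝ) 1).indicator
          (fun x => 2 * Real.sqrt (1 - x ^ 2) * ((U ℝ m).eval x) ^ 2) := by
    funext x
    have hrfl : (fun y => Sdisk.indicator F (x, y))
        = ({y : ℝ | x ^ 2 + y ^ 2 < 1}.indicator (fun y => F (x, y))) := rfl
    by_cases hx : x ^ 2 < 1
    · have hmem : x ∈ Set.Ioo (-1 : ℝ) 1 := by
        constructor <;> nlinarith
      rw [Set.indicator_of_mem hmem]
      rw [hrfl, Sdisk_section x hx, integral_indicator measurableSet_Ioo]
      simp only [hFdef]
      rw [setIntegral_const]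
      rw [Real.volume_real_Ioo_of_le (by linarith [Real.sqrt_nonneg (1 - x ^ 2)])]
      simp only [smul_eq_mul, hFdef]
      ring
    · have hmem : x ∉ Set.Ioo (-1 : ℝ) 1 := by
        intro hmem; apply hx
        obtain ⟨h1, h2⟩ := hmem; nlinarith
      rw [Set.indicator_of_notMem hmem]
      rw [hrfl]
      have hempty : {y : ℝ | x ^ 2 + y ^ 2 < 1} = ∅ := by
        ext y; simp only [Set.mem_setOf_eq, Set.mem_empty_iff_false, iff_false, not_lt]
        nlinarith [sq_nonneg y]
      rw [hempty]
      simp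
  rw [hin, integral_indicator measurableSet_Ioo, ← integral_Ioc_eq_integral_Ioo,
    ← intervalIntegral.integral_of_le (by norm_num : (-1 : ℝ) ≤ 1)]
  exact diag_1d m

lemma keyJ (m : ℕ) (A B : ℝ) :
    ∫ x in Metric.ball (0 : EuclideanSpace ℝ (Fin 2)) 1,
        (U ℝ m).eval (x 0 * Real.cos A + x 1 * Real.sin A)
          * (U ℝ m).eval (x 0 * Real.cos B + x 1 * Real.sin B)
      = ∫ x in Metric.ball (0 : EuclideanSpace ℝ (Fin 2)) 1,
        (U ℝ m).eval (x 0)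
          * (U ℝ m).eval (x 0 * Real.cos (B - A) + x 1 * Real.sin (B - A)) := by
  set g : EuclideanSpace ℝ (Fin 2) → ℝ := fun y =>
    (U ℝ m).eval (y 0 * Real.cos A + y 1 * Real.sin A)
      * (U ℝ m).eval (y 0 * Real.cos B + y 1 * Real.sin B) with hgdef
  have hemb : MeasurableEmbedding (rotE A) :=
    (rotE A).toHomeomorph.toMeasurableEquiv.measurableEmbedding
  have hmp : MeasurePreserving (rotE A) volume volume := (rotE A).measurePreserving
  have hpre : (rotE A) ⁻¹' (Metric.ball (0 : EuclideanSpace ℝ (Fin 2)) 1)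
      = Metric.ball (0 : EuclideanSpace ℝ (Fin 2)) 1 := by
    rw [(rotE A).preimage_ball]
    simp
  have := hmp.setIntegral_preimage_emb hemb g (Metric.ball 0 1)
  rw [hpre] at this
  rw [← this]
  apply setIntegral_congr_fun measurableSet_ball
  intro x _
  have h0 : (rotE A x) 0 = Real.cos A * x 0 - Real.sin A * x 1 := rfl
  have h1 : (rotE A x) 1 = Real.sin A * x 0 + Real.cos A * x 1 := rfl
  simp only [hgdef, h0, h1]
  have hP := Real.sin_sq_add_cos_sq A
  congr 1
  · congr 1
    linear_combination x 0 * hP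
  · congr 1
    rw [Real.cos_sub, Real.sin_sub]
    ring

end



open Real MeasureTheory

/-- The ridge polynomials `φ̃_{n,k}(x) = (1/√π) U_n(x₁ cos(kh) + x₂ sin(kh))`, `h = π/(n+1)`,
form an orthonormal family in `L²(B_2)`. -/
theorem ridge_polynomials_orthonormal (n : ℕ) :
    ∀ k ∈ Finset.range (n + 1), ∀ l ∈ Finset.range (n + 1),
      (∫ x in Metric.ball (0 : EuclideanSpace ℝ (Fin 2)) 1,
        ((1 / Real.sqrt π) *
            (Polynomial.Chebyshev.U ℝ n).eval
              (x 0 * Real.cos (k * (π / (n + 1))) + x 1 * Real.sin (k * (π / (n + 1))))) *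
        ((1 / Real.sqrt π) *
            (Polynomial.Chebyshev.U ℝ n).eval
              (x 0 * Real.cos (l * (π / (n + 1))) + x 1 * Real.sin (l * (π / (n + 1))))))
      = if k = l then 1 else 0 := by
  intro k hk l hl
  rw [Finset.mem_range] at hk hl
  set A : ℝ := (k : ℝ) * (π / (n + 1)) with hA
  set B : ℝ := (l : ℝ) * (π / (n + 1)) with hB
  have hconst : ∀ a b : ℝ, ((1 / Real.sqrt π) * a) * ((1 / Real.sqrt π) * b)
      = (1 / π) * (a * b) := by
    intro a b
    have h1 : (1 / Real.sqrt π) * (1 / Real.sqrt π) = 1 / π := by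
      rw [div_mul_div_comm, one_mul, Real.mul_self_sqrt Real.pi_pos.le]
    calc ((1 / Real.sqrt π) * a) * ((1 / Real.sqrt π) * b)
        = ((1 / Real.sqrt π) * (1 / Real.sqrt π)) * (a * b) := by ring
      _ = (1 / π) * (a * b) := by rw [h1]
  simp only [hconst]
  rw [integral_const_mul]
  rw [keyJ n A B]
  by_cases hkl : k = l
  · subst hkl
    rw [sub_self]
    have hval : (∫ x in Metric.ball (0 : EuclideanSpace ℝ (Fin 2)) 1,
        (U ℝ n).eval (x 0) * (U ℝ n).eval (x 0 * Real.cos 0 + x 1 * Real.sin 0)) = π :=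
      (ball_transfer (fun a b => (U ℝ n).eval a * (U ℝ n).eval (a * Real.cos 0 + b * Real.sin 0))).trans
        (diag_S n)
    rw [hval, if_pos rfl, one_div_mul_cancel Real.pi_ne_zero]
  · set γ : ℝ := B - A with hγ
    have hnd : ((n : ℝ) + 1) ≠ 0 := by positivity
    have hγ2 : ((n : ℝ) + 1) * γ = ((l : ℤ) - (k : ℤ) : ℤ) * π := by
      rw [hγ, hA, hB]
      push_cast
      field_simp
    have hsinN : Real.sin (((n : ℝ) + 1) * γ) = 0 := by
      rw [hγ2]
      exact Real.sin_int_mul_pi _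
    have hsinγ : Real.sin γ ≠ 0 := by
      intro h0
      rw [Real.sin_eq_zero_iff] at h0
      obtain ⟨j, hj⟩ := h0
      have hjr : ((n : ℝ) + 1) * ((j : ℝ) * π) = ((l : ℤ) - (k : ℤ) : ℤ) * π := by
        rw [hj]; exact hγ2
    -- cancel π
      have hint : ((n : ℤ) + 1) * j = (l : ℤ) - (k : ℤ) := by
        have := mul_right_cancel₀ Real.pi_ne_zero (by linarith [hjr] : (((n : ℝ) + 1) * (j : ℝ)) * π = (((l : ℤ) - (k : ℤ) : ℤ) : ℝ) * π)
        exact_mod_cast this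
      have hkn : (k : ℤ) ≤ n := by exact_mod_cast Nat.lt_succ_iff.mp hk
      have hln : (l : ℤ) ≤ n := by exact_mod_cast Nat.lt_succ_iff.mp hl
      have hklz : (k : ℤ) ≠ (l : ℤ) := by exact_mod_cast fun h => hkl (by exact_mod_cast h)
      rcases lt_trichotomy j 0 with hj0 | hj0 | hj0
      · nlinarith [hint, hj0]
      · apply hklz
        rw [hj0, mul_zero] at hint
        omega
      · nlinarith [hint, hj0]
    have hval : (∫ x in Metric.ball (0 : EuclideanSpace ℝ (Fin 2)) 1,
        (U ℝ n).eval (x 0) * (U ℝ n).eval (x 0 * Real.cos γ + x 1 * Real.sin γ)) = 0 :=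
      (ball_transfer (fun a b => (U ℝ n).eval a * (U ℝ n).eval (a * Real.cos γ + b * Real.sin γ))).trans
        (offdiag n γ hsinγ hsinN)
    rw [hval, if_neg hkl, mul_zero]
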